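/- A function f : ℝⁿ → ℝ with f(0)=0 is a Lovász extension if and only if f is horizontally min-additive and positively homogeneous of degree one. -/

import Mathlib

section Aux

variable {n : ℕ} (f : (Fin n → ℝ) → ℝ)

lemma aux_const (h0 : f (fun _ => 0) = 0)
    (hmin : ∀ (x : Fin n → ℝ) (c : ℝ),
      f x = f (fun i => min (x i) c) + f (fun i => x i - min (x i) c))
    (hhom : ∀ c : ℝ, 0 < c → ∀ x : Fin n → ℝ, f (c • x) = c * f x) (t : ℝ) :
    f (fun _ => t) = t * f (fun _ => (1:ℝ)) := by
  have hpos : ∀ u : ℝ, 0 < u → f (fun _ => u) = u * f (fun _ => (1:ℝ)) := by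
    intro u hu
    have := hhom u hu (fun _ => (1:ℝ))
    simpa [Pi.smul_def, smul_eq_mul] using this
  rcases lt_trichotomy t 0 with h | h | h
  · have hm := hmin (fun _ => (0:ℝ)) t
    have h1 : (fun i : Fin n => min ((fun _ => (0:ℝ)) i) t) = fun _ => t := by
      funext i; simp [min_eq_right h.le]
    have h2 : (fun i : Fin n => (fun _ => (0:ℝ)) i - min ((fun _ => (0:ℝ)) i) t)
        = fun _ => -t := by
      funext i; simp [min_eq_right h.le]
    rw [h0, h1, h2] at hm
    have h3 := hpos (-t) (by linarith)
    linarith [hm, h3]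
  · simp [h, h0]
  · exact hpos t h

open Fin.NatCast in
lemma aux_cone (h0 : f (fun _ => 0) = 0)
    (hmin : ∀ (x : Fin n → ℝ) (c : ℝ),
      f x = f (fun i => min (x i) c) + f (fun i => x i - min (x i) c))
    (hhom : ∀ c : ℝ, 0 < c → ∀ x : Fin n → ℝ, f (c • x) = c * f x)
    (σ : Equiv.Perm (Fin n)) :
    ∃ (a : Fin n → ℝ) (b : ℝ),
      ∀ x : Fin n → ℝ, Monotone (x ∘ σ) → f x = (∑ i, a i * x i) + b := by
  rcases Nat.eq_zero_or_pos n with hn | hn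
  · subst hn
    refine ⟨fun _ => 0, 0, fun x _ => ?_⟩
    have : x = fun _ => 0 := funext fun i => i.elim0
    simp [this, h0]
  haveI : NeZero n := ⟨hn.ne'⟩
  set F : ℕ → ℝ := fun k => f (fun i => if k ≤ ((σ.symm i : Fin n) : ℕ) then (1:ℝ) else 0)
    with hF
  refine ⟨fun i => F ((σ.symm i : Fin n) : ℕ) - F (((σ.symm i : Fin n) : ℕ) + 1), 0,
    fun x hx => ?_⟩
  set s : ℕ → ℝ := fun k => x (σ ((k : ℕ) : Fin n)) with hsdef
  have hxi : ∀ i, x i = s ((σ.symm i : Fin n) : ℕ) := by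
    intro i; simp [hsdef, Fin.cast_val_eq_self]
  have hs : ∀ j k, j ≤ k → k < n → s j ≤ s k := by
    intro j k hjk hk
    apply hx
    show ((j : ℕ) : Fin n) ≤ ((k : ℕ) : Fin n)
    rw [Fin.le_def, Fin.val_cast_of_lt (lt_of_le_of_lt hjk hk), Fin.val_cast_of_lt hk]
    exact hjk
  have key : ∀ m, m < n → f (fun i => min (x i) (s m)) =
      (∑ k ∈ Finset.range (m + 1), s k * (F k - F (k + 1))) + s m * F (m + 1) := by
    intro m
    induction m with
    | zero =>
      intro hm
      have hc : (fun i => min (x i) (s 0)) = fun _ => s 0 := by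
        funext i
        exact min_eq_right (by rw [hxi i]; exact hs 0 _ (Nat.zero_le _) (σ.symm i).isLt)
      have hF0 : F 0 = f (fun _ => (1:ℝ)) := by simp [hF]
      rw [hc, aux_const f h0 hmin hhom (s 0), Finset.sum_range_one, ← hF0]
      ring
    | succ m ih =>
      intro hm
      have hmn : m < n := by omega
      have ih' := ih hmn
      have hsm : s m ≤ s (m + 1) := hs m (m + 1) (Nat.le_succ m) hm
      have e1 : ∀ i, min (min (x i) (s (m + 1))) (s m) = min (x i) (s m) := by
        intro i; rw [min_assoc, min_eq_right hsm]
      have e2 : ∀ i, min (x i) (s (m + 1)) - min (min (x i) (s (m + 1))) (s m)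
          = (s (m + 1) - s m) * (if (m + 1) ≤ ((σ.symm i : Fin n) : ℕ) then (1:ℝ) else 0) := by
        intro i
        rw [e1 i]
        by_cases h : (m + 1) ≤ ((σ.symm i : Fin n) : ℕ)
        · have h1 : s (m + 1) ≤ x i := by rw [hxi i]; exact hs _ _ h (σ.symm i).isLt
          have h2 : s m ≤ x i := le_trans hsm h1
          rw [min_eq_right h1, min_eq_right h2, if_pos h]; ring
        · have h1 : x i ≤ s m := by rw [hxi i]; exact hs _ m (by omega) hmn
          have h2 : x i ≤ s (m + 1) := le_trans h1 hsm
          rw [min_eq_left h1, min_eq_left h2, if_neg h]; ring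
      have hmadd := hmin (fun i => min (x i) (s (m + 1))) (s m)
      have r1 : (fun i => min ((fun i => min (x i) (s (m + 1))) i) (s m))
          = fun i => min (x i) (s m) := funext e1
      have r2 : (fun i => (fun i => min (x i) (s (m + 1))) i
            - min ((fun i => min (x i) (s (m + 1))) i) (s m))
          = fun i => (s (m + 1) - s m) *
              (if (m + 1) ≤ ((σ.symm i : Fin n) : ℕ) then (1:ℝ) else 0) := funext e2
      rw [r1, r2] at hmadd
      have r3 : f (fun i => (s (m + 1) - s m) *
          (if (m + 1) ≤ ((σ.symm i : Fin n) : ℕ) then (1:ℝ) else 0))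
          = (s (m + 1) - s m) * F (m + 1) := by
        rcases (sub_nonneg.mpr hsm).eq_or_lt with h | h
        · rw [← h]; simp [h0]
        · have := hhom _ h (fun i => if (m + 1) ≤ ((σ.symm i : Fin n) : ℕ) then (1:ℝ) else 0)
          simpa [hF, Pi.smul_def, smul_eq_mul] using this
      rw [r3, ih'] at hmadd
      rw [hmadd, Finset.sum_range_succ, Finset.sum_range_succ, Finset.sum_range_succ]
      ring
  have hx' : (fun i => min (x i) (s (n - 1))) = x := by
    funext i
    exact min_eq_left (by rw [hxi i]; exact hs _ (n - 1) (by omega) (by omega))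
  have hFn : F n = 0 := by
    have hv : (fun i => if n ≤ ((σ.symm i : Fin n) : ℕ) then (1:ℝ) else 0)
        = fun _ => (0:ℝ) := by
      funext i; rw [if_neg (Nat.not_le.mpr (σ.symm i).isLt)]
    have : F n = f (fun i => if n ≤ ((σ.symm i : Fin n) : ℕ) then (1:ℝ) else 0) := rfl
    rw [this, hv]; exact h0
  have hkey := key (n - 1) (by omega)
  have hn1 : n - 1 + 1 = n := Nat.succ_pred_eq_of_pos hn
  rw [hx', hn1, hFn, mul_zero, add_zero] at hkey
  rw [add_zero, hkey,
    ← Fin.sum_univ_eq_sum_range (fun k => s k * (F k - F (k + 1))) n,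
    ← Equiv.sum_comp σ (fun i => (F ((σ.symm i : Fin n) : ℕ)
      - F (((σ.symm i : Fin n) : ℕ) + 1)) * x i)]
  refine Finset.sum_congr rfl fun k _ => ?_
  simp only [hsdef, Fin.cast_val_eq_self, Equiv.symm_apply_apply]
  ring

end Aux

/-- A Lovász extension: its restriction to each cone
`ℝⁿ_σ = {x : x_{σ(1)} ≤ … ≤ x_{σ(n)}}` is affine. -/
def IsLovasz {n : ℕ} (f : (Fin n → ℝ) → ℝ) : Prop :=
  ∀ σ : Equiv.Perm (Fin n), ∃ (a : Fin n → ℝ) (b : ℝ),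
    ∀ x : Fin n → ℝ, Monotone (x ∘ σ) → f x = (∑ i, a i * x i) + b

/-- for `f : ℝⁿ → ℝ` with `f(0) = 0`, `f` is a Lovász extension
iff `f` is horizontally min-additive and positively homogeneous of degree one. -/
theorem lovasz_iff_horizMinAdd_posHom {n : ℕ} (f : (Fin n → ℝ) → ℝ)
    (h0 : f (fun _ => 0) = 0) :
    IsLovasz f ↔
      ((∀ (x : Fin n → ℝ) (c : ℝ),
          f x = f (fun i => min (x i) c) + f (fun i => x i - min (x i) c)) ∧
        ∀ c : ℝ, 0 < c → ∀ x : Fin n → ℝ, f (c • x) = c * f x) := by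
  constructor
  · intro hL
    have hb0 : ∀ (a : Fin n → ℝ) (b : ℝ) (σ : Equiv.Perm (Fin n)),
        (∀ x : Fin n → ℝ, Monotone (x ∘ σ) → f x = (∑ i, a i * x i) + b) → b = 0 := by
      intro a b σ hab
      have := hab (fun _ => 0) (by intro i j _; exact le_rfl)
      rw [h0] at this
      simpa using this.symm
    constructor
    · intro x c
      obtain ⟨a, b, hab⟩ := hL (Tuple.sort x)
      have hσ : Monotone (x ∘ Tuple.sort x) := Tuple.monotone_sort x
      have hb := hb0 a b _ hab
      have h1 := hab x hσ
      have h2 := hab (fun i => min (x i) c) (by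
        intro i j hij
        exact min_le_min (hσ hij) le_rfl)
      have h3 := hab (fun i => x i - min (x i) c) (by
        intro i j hij
        have hij' : x (Tuple.sort x i) ≤ x (Tuple.sort x j) := hσ hij
        simp only [Function.comp_apply]
        rcases le_total (x (Tuple.sort x i)) c with h | h
        · rw [min_eq_left h, sub_self]
          exact sub_nonneg.2 (min_le_left _ _)
        · rw [min_eq_right h, min_eq_right (le_trans h hij')]
          linarith)
      rw [h1, h2, h3, hb, add_zero, add_zero, add_zero, ← Finset.sum_add_distrib]
      exact Finset.sum_congr rfl fun i _ => by ring
    · intro c hc x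
      obtain ⟨a, b, hab⟩ := hL (Tuple.sort x)
      have hσ : Monotone (x ∘ Tuple.sort x) := Tuple.monotone_sort x
      have hb := hb0 a b _ hab
      have h1 := hab x hσ
      have h2 := hab (c • x) (by
        intro i j hij
        have := hσ hij
        simp only [Function.comp_apply, Pi.smul_apply, smul_eq_mul]
        exact mul_le_mul_of_nonneg_left this hc.le)
      rw [h1, h2, hb, add_zero, add_zero, Finset.mul_sum]
      exact Finset.sum_congr rfl fun i _ => by
        simp only [Pi.smul_apply, smul_eq_mul]; ring
  · rintro ⟨hmin, hhom⟩ σ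
    exact aux_cone f h0 hmin hhom σ
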